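/- Let $d=1$, $g''(v)>0$ for all $v$, with either $\inf_v g''>0$ or $m\in L^1([0,\infty))$, $m=m(t)$ only. Then there exists a $C^1$ function $G(x,v)$, non-decreasing in $v$ for each $x$ and attaining values in $[0,1]$ with correct limits, and there exist $(t,x,v)$ such that $\partial_v F(t,x,v)<0$ for $F(t,x,v)=G(X(0;t,x,v),V(0;t,x,v))$; i.e., the condition '$\partial_x G\le 0$ everywhere' is necessary for global monotonicity preservation. -/

import Mathlib

set_option maxHeartbeats 1000000

open Real Set Filter MeasureTheory

lemma ftc_cont {f : ℝ → ℝ} (hf : Continuous f) (a b : ℝ) :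
    HasDerivAt (fun u => ∫ x in a..u, f x) (f b) b :=
  intervalIntegral.integral_hasDerivAt_right (hf.intervalIntegrable _ _)
    hf.aestronglyMeasurable.stronglyMeasurableAtFilter hf.continuousAt

theorem stmt_9 (g : ℝ → ℝ) (hg : ContDiff ℝ 2 g)
    (hconv : ∀ v, 0 < deriv (deriv g) v)
    (m : ℝ → ℝ) (hm : Continuous m)
    (hcase : (∃ c > (0 : ℝ), ∀ v, c ≤ deriv (deriv g) v) ∨
      MeasureTheory.IntegrableOn m (Set.Ici 0))
    (X V : ℝ → ℝ → ℝ → ℝ → ℝ)  -- backward characteristics `X τ t x v`, `V τ t x v`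
    (hX : ∀ t x v τ : ℝ, HasDerivAt (fun σ => X σ t x v) (deriv g (V τ t x v)) τ)
    (hV : ∀ t x v τ : ℝ, HasDerivAt (fun σ => V σ t x v) (m τ) τ)
    (hXt : ∀ t x v : ℝ, X t t x v = x) (hVt : ∀ t x v : ℝ, V t t x v = v) :
    ∃ G : ℝ → ℝ → ℝ,
      ContDiff ℝ 1 (fun p : ℝ × ℝ => G p.1 p.2) ∧
      (∀ x, Monotone (G x)) ∧
      (∀ x v, G x v ∈ Set.Icc (0 : ℝ) 1) ∧
      (∀ x, Filter.Tendsto (G x) Filter.atBot (nhds 0)) ∧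
      (∀ x, Filter.Tendsto (G x) Filter.atTop (nhds 1)) ∧
      ∃ t > (0 : ℝ), ∃ x v : ℝ,
        deriv (fun w => G (X 0 t x w) (V 0 t x w)) v < 0 := by
  -- regularity of g
  have hg1 : ContDiff ℝ 1 (deriv g) := by
    have : ((1:ℕ) + 1 : WithTop ℕ∞) = 2 := by norm_num
    exact ((contDiff_succ_iff_deriv (n := 1)).mp (this ▸ hg)).2.2
  have hg1c : Continuous (deriv g) := hg1.continuous
  have hg2c : Continuous (deriv (deriv g)) := by
    have : ((0:ℕ) + 1 : WithTop ℕ∞) = 1 := by norm_num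
    exact ((contDiff_succ_iff_deriv (n := 0)).mp (this ▸ hg1)).2.2.continuous
  have hg'd : ∀ y, HasDerivAt (deriv g) (deriv (deriv g) y) y :=
    fun y => (hg1.differentiable one_ne_zero y).hasDerivAt
  -- auxiliary integrals
  set J : ℝ → ℝ := fun σ => ∫ s in (0:ℝ)..σ, m s with hJdef
  have hJcont : Continuous J := intervalIntegral.continuous_primitive
    (fun a b => hm.intervalIntegrable a b) 0
  have hJderiv : ∀ σ, HasDerivAt J (m σ) σ := fun σ => ftc_cont hm 0 σ
  set I : ℝ := J 1 with hIdef
  -- formula for V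
  have hVform : ∀ w σ : ℝ, V σ 1 0 w = w - I + J σ := by
    intro w σ
    have hdiff : Differentiable ℝ (fun σ => V σ 1 0 w - J σ) :=
      fun σ => ((hV 1 0 w σ).sub (hJderiv σ)).differentiableAt
    have hzero : ∀ σ, deriv (fun σ => V σ 1 0 w - J σ) σ = 0 := by
      intro σ
      have := ((hV 1 0 w σ).sub (hJderiv σ)).deriv
      exact this.trans (sub_self _)
    have := is_const_of_deriv_eq_zero hdiff hzero σ 1
    have h1 : V 1 1 0 w = w := hVt 1 0 w
    simp only [h1] at this
    linarith [this]
  -- formula for X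
  set P : ℝ → ℝ := fun w => ∫ τ in (0:ℝ)..1, deriv g (w - I + J τ) with hPdef
  have hintcont : ∀ w : ℝ, Continuous (fun τ => deriv g (w - I + J τ)) := by
    intro w
    exact hg1c.comp (continuous_const.add hJcont)
  have hXform : ∀ w : ℝ, X 0 1 0 w = -P w := by
    intro w
    set h : ℝ → ℝ := fun σ => ∫ τ in (0:ℝ)..σ, deriv g (w - I + J τ) with hhdef
    have hhd : ∀ σ, HasDerivAt h (deriv g (w - I + J σ)) σ :=
      fun σ => ftc_cont (hintcont w) 0 σ
    have hdiff : Differentiable ℝ (fun σ => X σ 1 0 w - h σ) := by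
      intro σ
      have hx := hX 1 0 w σ
      rw [hVform w σ] at hx
      exact (hx.sub (hhd σ)).differentiableAt
    have hzero : ∀ σ, deriv (fun σ => X σ 1 0 w - h σ) σ = 0 := by
      intro σ
      have hx := hX 1 0 w σ
      rw [hVform w σ] at hx
      have := (hx.sub (hhd σ)).deriv
      exact this.trans (sub_self _)
    have hc := is_const_of_deriv_eq_zero hdiff hzero 0 1
    have h1 : X 1 1 0 w = 0 := hXt 1 0 w
    have h0 : h 0 = 0 := intervalIntegral.integral_same
    have h1' : h 1 = P w := rfl
    simp only [h1, h0, h1'] at hc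
    linarith [hc]
  -- derivative of P
  set A : ℝ → ℝ := fun w => ∫ τ in (0:ℝ)..1, deriv (deriv g) (w - I + J τ) with hAdef
  have hA2cont : ∀ w : ℝ, Continuous (fun τ => deriv (deriv g) (w - I + J τ)) := by
    intro w
    exact hg2c.comp (continuous_const.add hJcont)
  have hPderiv : ∀ w : ℝ, HasDerivAt P (A w) w := by
    intro w
    obtain ⟨C, hC⟩ : ∃ C, ∀ p ∈ (Icc (w - 1) (w + 1)) ×ˢ (Icc (0:ℝ) 1),
        ‖deriv (deriv g) (p.1 - I + J p.2)‖ ≤ C := by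
      have hcont : ContinuousOn (fun p : ℝ × ℝ => deriv (deriv g) (p.1 - I + J p.2))
          ((Icc (w - 1) (w + 1)) ×ˢ (Icc (0:ℝ) 1)) := by
        apply Continuous.continuousOn
        exact hg2c.comp ((continuous_fst.sub continuous_const).add (hJcont.comp continuous_snd))
      exact ((isCompact_Icc.prod isCompact_Icc).exists_bound_of_continuousOn hcont)
    refine (intervalIntegral.hasDerivAt_integral_of_dominated_loc_of_deriv_le
      (F := fun x τ => deriv g (x - I + J τ))
      (F' := fun x τ => deriv (deriv g) (x - I + J τ))
      (bound := fun _ => C) (Metric.ball_mem_nhds w one_pos)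
      ?_ ?_ ?_ ?_ ?_ ?_).2
    · filter_upwards with x
      exact ((hintcont x)).aestronglyMeasurable
    · exact (hintcont w).intervalIntegrable 0 1
    · exact (hA2cont w).aestronglyMeasurable
    · filter_upwards with τ hτ x hx
      have hτ' : τ ∈ Icc (0:ℝ) 1 := by
        rcases hτ with ⟨h1, h2⟩
        constructor <;> [exact le_of_lt (by simpa using h1); simpa using h2]
      have hx' : x ∈ Icc (w - 1) (w + 1) := by
        rw [Metric.mem_ball, Real.dist_eq, abs_lt] at hx
        constructor <;> linarith [hx.1, hx.2]
      exact hC (x, τ) ⟨hx', hτ'⟩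
    · exact intervalIntegrable_const
    · filter_upwards with τ hτ x hx
      have : HasDerivAt (fun x : ℝ => x - I + J τ) 1 x := by
        simpa using ((hasDerivAt_id x).sub_const I).add_const (J τ)
      have h := (hg'd (x - I + J τ)).comp x this
      rw [mul_one] at h
      exact h
  -- positivity of A 0
  have hA0 : 0 < A 0 := by
    apply intervalIntegral.intervalIntegral_pos_of_pos_on
    · exact (hA2cont 0).intervalIntegrable 0 1
    · intro τ _; exact hconv _
    · norm_num
  set K : ℝ := 2 / A 0 with hKdef
  -- the function G
  refine ⟨fun x v => arctan (v + K * x) / π + 1/2, ?_, ?_, ?_, ?_, ?_, ?_⟩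
  · -- C¹
    have h1 : ContDiff ℝ 1 (fun p : ℝ × ℝ => p.2 + K * p.1) :=
      contDiff_snd.add (contDiff_const.mul contDiff_fst)
    exact ((Real.contDiff_arctan.comp h1).div_const π).add contDiff_const
  · -- monotone in v
    intro x a b hab
    have : arctan (a + K * x) ≤ arctan (b + K * x) :=
      arctan_strictMono.monotone (by linarith)
    exact add_le_add_left (div_le_div_of_nonneg_right this pi_pos.le) _
  · -- values in [0,1]
    intro x v
    have h1 := neg_pi_div_two_lt_arctan (v + K * x)
    have h2 := arctan_lt_pi_div_two (v + K * x)
    have hπ := pi_pos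
    constructor
    · have : -(1/2 : ℝ) ≤ arctan (v + K * x) / π := by
        rw [le_div_iff₀ hπ]; nlinarith
      linarith
    · have : arctan (v + K * x) / π ≤ 1/2 := by
        rw [div_le_iff₀ hπ]; nlinarith
      linarith
  · -- limit at -∞
    intro x
    have h1 : Tendsto (fun v : ℝ => v + K * x) atBot atBot :=
      tendsto_atBot_add_const_right _ _ tendsto_id
    have h2 : Tendsto (fun v : ℝ => arctan (v + K * x)) atBot (nhds (-(π/2))) :=
      (tendsto_arctan_atBot.mono_right nhdsWithin_le_nhds).comp h1
    have h3 := (h2.div_const π).add (tendsto_const_nhds (x := (1/2 : ℝ)))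
    have : -(π/2) / π + 1/2 = 0 := by
      field_simp
      ring
    rwa [this] at h3
  · -- limit at +∞
    intro x
    have h1 : Tendsto (fun v : ℝ => v + K * x) atTop atTop :=
      tendsto_atTop_add_const_right _ _ tendsto_id
    have h2 : Tendsto (fun v : ℝ => arctan (v + K * x)) atTop (nhds (π/2)) :=
      (tendsto_arctan_atTop.mono_right nhdsWithin_le_nhds).comp h1
    have h3 := (h2.div_const π).add (tendsto_const_nhds (x := (1/2 : ℝ)))
    have : (π/2) / π + 1/2 = 1 := by
      field_simp
      ring
    rwa [this] at h3
  · -- the counterexample point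
    refine ⟨1, one_pos, 0, 0, ?_⟩
    show deriv (fun w => arctan (V 0 1 0 w + K * X 0 1 0 w) / π + 1/2) 0 < 0
    have hfun : (fun w => arctan (V 0 1 0 w + K * X 0 1 0 w) / π + 1/2) =
        fun w => arctan (w - I + J 0 + K * -P w) / π + 1/2 := by
      funext w; rw [hVform w 0, hXform w]
    rw [hfun]
    have hinner : HasDerivAt (fun w => w - I + J 0 + K * -P w) (-1) 0 := by
      have h1 : HasDerivAt (fun w : ℝ => w - I + J 0) 1 0 := by
        simpa using ((hasDerivAt_id (0:ℝ)).sub_const I).add_const (J 0)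
      have h2 : HasDerivAt (fun w => K * -P w) (K * -A 0) 0 :=
        ((hPderiv 0).neg).const_mul K
      have h3 := h1.add h2
      have hval : 1 + K * -A 0 = -1 := by
        rw [hKdef]; field_simp; ring
      rwa [hval] at h3
    have houter := ((hinner.arctan).div_const π).add_const (1/2 : ℝ)
    rw [houter.deriv]
    apply div_neg_of_neg_of_pos _ pi_pos
    exact mul_neg_of_pos_of_neg (by positivity) (by norm_num)
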